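/- arXiv:2408.16092 — 2 statements merged into one kernel-verified Lean document; each statement's English description precedes it below -/
import Mathlib

section
/- Consider n tasks arriving at time 0, where task i (for 1 ≤ i ≤ n) has slow runtime σ_i = 2^i and fast runtime π_i = 2^(i-1). For every k with 1 ≤ k ≤ n, the first k tasks admit a schedule with completion time at most 2^(k-1): run tasks 1 through k-1 each on their own slow machine and task k on the fast machine. Moreover no schedule of the first k tasks completes before time 2^(k-1). -/
/-- Makespan of the schedule running the tasks of `S` on the fast machine
(back-to-back, task `i` taking fast time `2^(i-1)`) and all other tasks of
`{1, …, k}` each on their own slow machine (task `i` taking slow time `2^i`). -/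
def makespan7 (k : ℕ) (S : Finset ℕ) : ℕ :=
  max (∑ i ∈ S, 2 ^ (i - 1)) ((Finset.Icc 1 k \ S).sup fun i => 2 ^ i)

/-- For tasks 1,…,n with σ_i = 2^i and π_i = 2^(i-1), for every 1 ≤ k ≤ n the
first k tasks admit a schedule with completion time at most 2^(k-1), and no
schedule of the first k tasks completes before time 2^(k-1). -/
theorem stmt_7 (n k : ℕ) (hk : 1 ≤ k) (hkn : k ≤ n) :
    (∃ S ⊆ Finset.Icc 1 k, makespan7 k S ≤ 2 ^ (k - 1)) ∧
    ∀ S ⊆ Finset.Icc 1 k, 2 ^ (k - 1) ≤ makespan7 k S := by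
  constructor
  · refine ⟨{k}, by simp [hk], ?_⟩
    unfold makespan7
    simp only [Finset.sum_singleton]
    refine max_le le_rfl (Finset.sup_le ?_)
    intro i hi
    simp only [Finset.mem_sdiff, Finset.mem_Icc, Finset.mem_singleton] at hi
    exact Nat.pow_le_pow_right (by norm_num) (by omega)
  · intro S hS
    unfold makespan7
    by_cases h : k ∈ S
    · exact le_max_of_le_left
        (Finset.single_le_sum (f := fun i => 2 ^ (i - 1)) (fun _ _ => Nat.zero_le _) h)
    · refine le_max_of_le_right ?_
      have hm : k ∈ Finset.Icc 1 k \ S := by simp [h, hk]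
      calc 2 ^ (k - 1) ≤ 2 ^ k := Nat.pow_le_pow_right (by norm_num) (Nat.sub_le _ _)
        _ ≤ _ := Finset.le_sup hm
end

section
/- Consider finitely many tasks, task i having slow runtime σ_i > 0 and fast runtime π_i > 0, all arriving at time 0. Define, for a subset S of tasks, the makespan M(S) = max(Σ_{i∈S} π_i, max_{i∉S} σ_i) (with max over the empty set equal to 0), corresponding to running S on the fast machine back-to-back and the rest each on its own slow machine. Then the minimum of M(S) over all subsets S equals the minimum over all valid schedules of the completion time, and moreover if C denotes this minimum then the set S* = {i : σ_i > C} achieves M(S*) = C. -/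
open Finset

/-- Makespan of the schedule running the tasks of `S` back-to-back on the fast
machine and every other task on its own slow machine. -/
def makespan15 {n : ℕ} (σ π : Fin n → ℝ) (S : Finset (Fin n)) : ℝ :=
  max (∑ i ∈ S, π i) (Sᶜ.fold max 0 σ)

/-- The optimal makespan over all subset choices for the fast machine. -/
noncomputable def optC {n : ℕ} (σ π : Fin n → ℝ) : ℝ :=
  (Finset.univ : Finset (Finset (Fin n))).inf' ⟨∅, Finset.mem_univ ∅⟩ (makespan15 σ π)

-- packing lemma
lemma pack15 {n : ℕ} (π : Fin n → ℝ) (hπ : ∀ i, 0 < π i) (start : Fin n → ℝ)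
    (s : Finset (Fin n)) :
    ∀ b : ℝ, 0 ≤ b → (∀ i ∈ s, start i + π i ≤ b) →
    (∀ i ∈ s, ∀ j ∈ s, i ≠ j → start i + π i ≤ start j ∨ start j + π j ≤ start i) →
    (∀ i ∈ s, 0 ≤ start i) →
    ∑ i ∈ s, π i ≤ b := by
  induction s using Finset.strongInduction with
  | _ s ih =>
    intro b hb hend hdisj hpos
    rcases s.eq_empty_or_nonempty with rfl | hne
    · simpa using hb
    · obtain ⟨i, hi, hmax⟩ := s.exists_max_image start hne
      have hsum : π i + ∑ j ∈ s.erase i, π j = ∑ j ∈ s, π j :=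
        Finset.add_sum_erase _ _ hi
      have hrest : ∑ j ∈ s.erase i, π j ≤ start i := by
        refine ih (s.erase i) (Finset.erase_ssubset hi) (start i) (hpos i hi) ?_ ?_ ?_
        · intro j hj
          have hjs := Finset.mem_of_mem_erase hj
          have hne' : j ≠ i := Finset.ne_of_mem_erase hj
          rcases hdisj j hjs i hi hne' with h | h
          · exact h
          · have := hmax j hjs
            linarith [hπ i]
        · intro a ha c hc hne'
          exact hdisj a (Finset.mem_of_mem_erase ha) c (Finset.mem_of_mem_erase hc) hne'
        · intro a ha; exact hpos a (Finset.mem_of_mem_erase ha)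
      have := hend i hi
      linarith

/-- For finitely many tasks (all arriving at time 0) with positive slow times σ
and fast times π, the minimum over subsets S of
M(S) = max(Σ_{i∈S} π_i, max_{i∉S} σ_i) equals the minimum completion time over
all valid schedules (each slow task on its own slow machine starting at a
nonnegative time; the fast machine runs its tasks on disjoint intervals), and
the threshold set S* = {i : σ_i > C} achieves this optimum C. -/
theorem stmt_15 {n : ℕ} (σ π : Fin n → ℝ)
    (hσ : ∀ i, 0 < σ i) (hπ : ∀ i, 0 < π i) :
    IsLeast {c : ℝ | ∃ (fast : Fin n → Bool) (start : Fin n → ℝ),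
        (∀ i, 0 ≤ start i) ∧
        (∀ i j, i ≠ j → fast i = true → fast j = true →
          start i + π i ≤ start j ∨ start j + π j ≤ start i) ∧
        c = Finset.univ.fold max 0
          (fun i => start i + if fast i then π i else σ i)}
      (optC σ π) ∧
    makespan15 σ π (Finset.univ.filter fun i => optC σ π < σ i) = optC σ π := by
  classical
  obtain ⟨S₀, -, hS₀⟩ := Finset.exists_mem_eq_inf'
    (⟨∅, Finset.mem_univ ∅⟩ : (Finset.univ : Finset (Finset (Fin n))).Nonempty)
    (makespan15 σ π)
  have hCm : optC σ π = makespan15 σ π S₀ := hS₀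
  have hopt : ∀ S : Finset (Fin n), optC σ π ≤ makespan15 σ π S := fun S =>
    Finset.inf'_le _ (Finset.mem_univ S)
  have hC0 : 0 ≤ optC σ π := by
    rw [hCm]
    have : (0:ℝ) ≤ S₀ᶜ.fold max 0 σ := (Finset.le_fold_max _).mpr (Or.inl le_rfl)
    exact this.trans (le_max_right _ _)
  -- lower bound: every schedule's completion time is ≥ optC σ π
  have hlb : ∀ c ∈ {c : ℝ | ∃ (fast : Fin n → Bool) (start : Fin n → ℝ),
        (∀ i, 0 ≤ start i) ∧
        (∀ i j, i ≠ j → fast i = true → fast j = true →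
          start i + π i ≤ start j ∨ start j + π j ≤ start i) ∧
        c = Finset.univ.fold max 0
          (fun i => start i + if fast i then π i else σ i)}, optC σ π ≤ c := by
    rintro c ⟨fast, start, hpos, hdisj, rfl⟩
    set c := Finset.univ.fold max 0 (fun i => start i + if fast i then π i else σ i) with hc
    have hc0 : (0:ℝ) ≤ c := (Finset.le_fold_max _).mpr (Or.inl le_rfl)
    have hterm : ∀ i, start i + (if fast i then π i else σ i) ≤ c := by
      intro i
      exact (Finset.le_fold_max _).mpr (Or.inr ⟨i, Finset.mem_univ i, le_rfl⟩)
    have h1 : ∑ i ∈ Finset.univ.filter (fun i => fast i = true), π i ≤ c := by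
      refine pack15 π hπ start _ c hc0 ?_ ?_ ?_
      · intro i hi
        have := hterm i
        rw [Finset.mem_filter] at hi
        simpa [hi.2] using this
      · intro i hi j hj hne
        rw [Finset.mem_filter] at hi hj
        exact hdisj i j hne hi.2 hj.2
      · intro i _; exact hpos i
    have h2 : (Finset.univ.filter (fun i => fast i = true))ᶜ.fold max 0 σ ≤ c := by
      rw [Finset.fold_max_le]
      refine ⟨hc0, fun i hi => ?_⟩
      rw [Finset.mem_compl, Finset.mem_filter] at hi
      have hfi : fast i = false := by
        by_contra h
        exact hi ⟨Finset.mem_univ i, by simpa using h⟩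
      have := hterm i
      rw [hfi] at this
      simp only [Bool.false_eq_true, if_false] at this
      linarith [hpos i]
    calc optC σ π ≤ makespan15 σ π (Finset.univ.filter (fun i => fast i = true)) := hopt _
      _ ≤ c := max_le h1 h2
  constructor
  · constructor
    · -- membership: construct the schedule from S₀
      have hS0sum : ∑ i ∈ S₀, π i ≤ optC σ π := by
        rw [hCm]; exact le_max_left _ _
      refine ⟨fun i => decide (i ∈ S₀),
        fun i => if i ∈ S₀ then ∑ j ∈ S₀.filter (fun j => j < i), π j else 0,
        ?_, ?_, ?_⟩
      · intro i
        dsimp only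
        split
        · exact Finset.sum_nonneg fun j _ => (hπ j).le
        · exact le_rfl
      · intro i j hne hi hj
        rw [decide_eq_true_iff] at hi hj
        have key : ∀ a b : Fin n, a ∈ S₀ → b ∈ S₀ → a < b →
            (∑ k ∈ S₀.filter (fun k => k < a), π k) + π a ≤
            ∑ k ∈ S₀.filter (fun k => k < b), π k := by
          intro a b ha hb hab
          have : (∑ k ∈ S₀.filter (fun k => k < a), π k) + π a =
              ∑ k ∈ insert a (S₀.filter (fun k => k < a)), π k := by
            rw [Finset.sum_insert (by simp)]
            ring
          rw [this]
          refine Finset.sum_le_sum_of_subset_of_nonneg ?_ (fun k _ _ => (hπ k).le)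
          intro k hk
          rw [Finset.mem_insert] at hk
          rcases hk with rfl | hk
          · exact Finset.mem_filter.mpr ⟨ha, hab⟩
          · rw [Finset.mem_filter] at hk ⊢
            exact ⟨hk.1, hk.2.trans hab⟩
        rcases lt_or_gt_of_ne hne with h | h
        · left; simp only [hi, hj, if_true]; exact key i j hi hj h
        · right; simp only [hi, hj, if_true]; exact key j i hj hi h
      · -- completion time equals optC σ π
        set start := fun i => if i ∈ S₀ then ∑ j ∈ S₀.filter (fun j => j < i), π j else 0
          with hstart
        set c := Finset.univ.fold max 0
          (fun i => start i + if decide (i ∈ S₀) then π i else σ i) with hc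
        have hterm : ∀ i, start i + (if decide (i ∈ S₀) then π i else σ i) ≤ c :=
          fun i => (Finset.le_fold_max _).mpr (Or.inr ⟨i, Finset.mem_univ i, le_rfl⟩)
        have hc0 : (0:ℝ) ≤ c := (Finset.le_fold_max _).mpr (Or.inl le_rfl)
        have hle : c ≤ optC σ π := by
          rw [hc, Finset.fold_max_le]
          refine ⟨hC0, fun i _ => ?_⟩
          by_cases hi : i ∈ S₀
          · simp only [hstart, hi, if_true, decide_eq_true_eq]
            calc (∑ j ∈ S₀.filter (fun j => j < i), π j) + π i
                = ∑ j ∈ insert i (S₀.filter (fun j => j < i)), π j := by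
                  rw [Finset.sum_insert (by simp)]; ring
              _ ≤ ∑ j ∈ S₀, π j := by
                  refine Finset.sum_le_sum_of_subset_of_nonneg ?_ (fun k _ _ => (hπ k).le)
                  intro k hk
                  rw [Finset.mem_insert] at hk
                  rcases hk with rfl | hk
                  · exact hi
                  · exact (Finset.mem_filter.mp hk).1
              _ ≤ optC σ π := hS0sum
          · simp only [hstart, hi, if_false, decide_eq_true_eq, zero_add]
            have : σ i ≤ S₀ᶜ.fold max 0 σ :=
              (Finset.le_fold_max _).mpr (Or.inr ⟨i, Finset.mem_compl.mpr hi, le_rfl⟩)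
            rw [hCm]
            exact this.trans (le_max_right _ _)
        have hge : optC σ π ≤ c := by
          rw [hCm]
          refine max_le ?_ ?_
          · rcases S₀.eq_empty_or_nonempty with rfl | hne
            · simpa using hc0
            · obtain ⟨m, hm, hmax⟩ := S₀.exists_max_image id hne
              have : ∑ j ∈ S₀, π j = start m + π m := by
                simp only [hstart, hm, if_true]
                have hfilt : S₀.filter (fun j => j < m) = S₀.erase m := by
                  ext k
                  simp only [Finset.mem_filter, Finset.mem_erase]
                  constructor
                  · rintro ⟨hk, hlt⟩; exact ⟨ne_of_lt hlt, hk⟩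
                  · rintro ⟨hne', hk⟩
                    exact ⟨hk, lt_of_le_of_ne (hmax k hk) hne'⟩
                rw [hfilt, add_comm, Finset.add_sum_erase _ _ hm]
              rw [this]
              have := hterm m
              simpa [hm] using this
          · rw [Finset.fold_max_le]
            refine ⟨hc0, fun i hi => ?_⟩
            rw [Finset.mem_compl] at hi
            have := hterm i
            simp only [hstart, hi, if_false, decide_eq_true_eq, zero_add] at this
            exact this
        linarith
    · exact hlb
  · -- threshold set
    have hsub : (Finset.univ.filter fun i => optC σ π < σ i) ⊆ S₀ := by
      intro i hi
      rw [Finset.mem_filter] at hi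
      by_contra h
      have : σ i ≤ optC σ π := by
        have h1 : σ i ≤ S₀ᶜ.fold max 0 σ :=
          (Finset.le_fold_max _).mpr (Or.inr ⟨i, Finset.mem_compl.mpr h, le_rfl⟩)
        rw [hCm]
        exact h1.trans (le_max_right _ _)
      linarith [hi.2]
    have h1 : ∑ i ∈ Finset.univ.filter (fun i => optC σ π < σ i), π i ≤ optC σ π := by
      calc ∑ i ∈ Finset.univ.filter (fun i => optC σ π < σ i), π i
          ≤ ∑ i ∈ S₀, π i :=
            Finset.sum_le_sum_of_subset_of_nonneg hsub (fun k _ _ => (hπ k).le)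
        _ ≤ optC σ π := by rw [hCm]; exact le_max_left _ _
    have h2 : (Finset.univ.filter (fun i => optC σ π < σ i))ᶜ.fold max 0 σ ≤ optC σ π := by
      rw [Finset.fold_max_le]
      refine ⟨hC0, fun i hi => ?_⟩
      rw [Finset.mem_compl, Finset.mem_filter] at hi
      push_neg at hi
      exact hi (Finset.mem_univ i)
    exact le_antisymm (max_le h1 h2) (hopt _)
end
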